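/- Let m > 0 and let x, y ∈ ℝ² with x ≠ y. Then the massive Green function admits the two equal representations: ∫₀^∞ exp(−m²s/2 − ‖x−y‖²/(2s)) ds/(2s) = ∫₁^∞ k_m(s(x−y))/s ds, where both integrals are taken in the Lebesgue sense. -/

import Mathlib

open MeasureTheory Real Set Filter
open scoped ENNReal

-- scaling substitution for lintegrals on (0,∞)
lemma lint_scale (f : ℝ → ℝ≥0∞) (hf : Measurable f) {c : ℝ} (hc : 0 < c) :
    ∫⁻ u in Ioi (0:ℝ), f (c * u) = ENNReal.ofReal c⁻¹ * ∫⁻ u in Ioi (0:ℝ), f u := by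
  have hpre : (fun x : ℝ => c * x) ⁻¹' Ioi 0 = Ioi 0 := by
    ext x
    simp [mul_pos_iff_of_pos_left, hc, mul_pos_iff, hc.not_gt]
  have key : Measure.map (fun x : ℝ => c * x) (volume.restrict (Ioi (0:ℝ)))
      = (ENNReal.ofReal |c⁻¹|) • (volume.restrict (Ioi (0:ℝ))) := by
    conv_lhs => rw [← hpre]
    rw [← Measure.restrict_map (measurable_const_mul c) measurableSet_Ioi,
      Real.map_volume_mul_left hc.ne', Measure.restrict_smul]
  have := lintegral_map hf (measurable_const_mul c) (μ := volume.restrict (Ioi (0:ℝ)))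
  rw [← this, key, lintegral_smul_measure, abs_of_pos (inv_pos.2 hc), smul_eq_mul]

lemma gauss_tail {u : ℝ} (hu : 0 < u) :
    ∫ s in Ioi (1:ℝ), s * Real.exp (-(u/2) * s^2) = Real.exp (-u/2) / u := by
  have hint : IntegrableOn (fun s : ℝ => s * Real.exp (-(u/2) * s^2)) (Ioi 1) :=
    (integrable_mul_exp_neg_mul_sq (by positivity : (0:ℝ) < u/2)).integrableOn
  have hderiv : ∀ s ∈ Ioi (1:ℝ),
      HasDerivAt (fun s : ℝ => -Real.exp (-(u/2) * s^2) / u) (s * Real.exp (-(u/2) * s^2)) s := by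
    intro s _
    have h1 : HasDerivAt (fun s : ℝ => -(u/2) * s^2) (-(u/2) * (2 * s^1)) s :=
      (hasDerivAt_pow 2 s).const_mul _
    have h2 := (h1.exp.neg.div_const u)
    refine h2.congr_deriv ?_
    field_simp [hu.ne']
  have htend : Tendsto (fun s : ℝ => -Real.exp (-(u/2) * s^2) / u) atTop (nhds 0) := by
    have h0 : Tendsto (fun s : ℝ => -(u/2) * s^2) atTop atBot :=
      (tendsto_pow_atTop two_ne_zero).const_mul_atTop_of_neg (by linarith)
    have := (Real.tendsto_exp_atBot.comp h0).neg.div_const u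
    simpa using this
  have hcont : ContinuousWithinAt (fun s : ℝ => -Real.exp (-(u/2) * s^2) / u) (Ici 1) 1 :=
    ((Real.continuous_exp.comp (by continuity)).neg.div_const u).continuousWithinAt
  have := integral_Ioi_of_hasDerivAt_of_tendsto hcont hderiv hint htend
  rw [this]
  norm_num
  ring

lemma exp_integrable {a : ℝ} (ha : 0 ≤ a) :
    IntegrableOn (fun t : ℝ => Real.exp (-a/(2*t) - t/2)) (Ioi 0) := by
  have hg : IntegrableOn (fun t : ℝ => Real.exp (-(1/2) * t)) (Ioi 0) :=
    exp_neg_integrableOn_Ioi 0 (by norm_num)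
  refine hg.mono' (Measurable.aestronglyMeasurable
    (Real.measurable_exp.comp ((measurable_const.div (measurable_id.const_mul 2)).sub
      (measurable_id.div_const 2)))) ?_
  filter_upwards [ae_restrict_mem measurableSet_Ioi] with t ht
  have ht' : (0:ℝ) < t := ht
  rw [Real.norm_eq_abs, abs_of_pos (Real.exp_pos _)]
  apply Real.exp_le_exp.2
  have h1 : 0 ≤ a / (2*t) := by positivity
  have h2 : -a/(2*t) = -(a/(2*t)) := by ring
  linarith

/-- `km m z = (1/2) ∫₀^∞ exp(−m²‖z‖²/(2s) − s/2) ds`. -/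
noncomputable def km (m : ℝ) (z : EuclideanSpace ℝ (Fin 2)) : ℝ :=
  (1 / 2) * ∫ s in Set.Ioi (0 : ℝ), Real.exp (-(m ^ 2 * ‖z‖ ^ 2) / (2 * s) - s / 2)

/-- The two representations of the massive Green function agree off the diagonal:
`∫₀^∞ exp(−m²s/2 − ‖x−y‖²/(2s)) ds/(2s) = ∫₁^∞ k_m(s(x−y))/s ds`. -/
theorem massive_green_function_two_representations
    (m : ℝ) (hm : 0 < m) (x y : EuclideanSpace ℝ (Fin 2)) (hxy : x ≠ y) :
    ∫⁻ s in Set.Ioi (0 : ℝ),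
        ENNReal.ofReal (Real.exp (-(m ^ 2 * s) / 2 - ‖x - y‖ ^ 2 / (2 * s)) / (2 * s))
      = ∫⁻ s in Set.Ioi (1 : ℝ), ENNReal.ofReal (km m (s • (x - y)) / s) := by
  have hxy' : x - y ≠ 0 := sub_ne_zero.2 hxy
  set r : ℝ := ‖x - y‖ with hrdef
  have hr : 0 < r := norm_pos_iff.2 hxy'
  set A : ℝ := m ^ 2 * r ^ 2 with hAdef
  have hApos : 0 < A := by positivity
  -- the common double-integrand
  set F : ℝ → ℝ → ℝ≥0∞ :=
    fun s u => ENNReal.ofReal (s / 2 * Real.exp (-A / (2 * u) - s ^ 2 * u / 2)) with hFdef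
  have hFmeas : Measurable (Function.uncurry F) := by
    apply Measurable.ennreal_ofReal
    exact (measurable_fst.div_const 2).mul
      (Real.measurable_exp.comp
        ((measurable_const.div (measurable_snd.const_mul 2)).sub
          (((measurable_fst.pow_const 2).mul measurable_snd).div_const 2)))
  -- the common single-variable function
  set G : ℝ → ℝ≥0∞ :=
    fun u => ENNReal.ofReal (Real.exp (-u / 2 - A / (2 * u)) / (2 * u)) with hGdef
  -- Step 1 : LHS = ∫⁻ G
  have hgmeas : Measurable fun s : ℝ =>
      ENNReal.ofReal (Real.exp (-(m ^ 2 * s) / 2 - r ^ 2 / (2 * s)) / (2 * s)) := by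
    apply Measurable.ennreal_ofReal
    exact (Real.measurable_exp.comp
      (((measurable_id.const_mul (m ^ 2)).neg.div_const 2).sub
        (measurable_const.div (measurable_id.const_mul 2)))).div (measurable_id.const_mul 2)
  have hm2 : (0:ℝ) < (m ^ 2)⁻¹ := by positivity
  have step1 :
      (∫⁻ s in Set.Ioi (0 : ℝ),
        ENNReal.ofReal (Real.exp (-(m ^ 2 * s) / 2 - r ^ 2 / (2 * s)) / (2 * s)))
      = ∫⁻ u in Set.Ioi (0:ℝ), G u := by
    have hscale := lint_scale _ hgmeas hm2
    rw [inv_inv] at hscale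
    have hcongr : ∫⁻ u in Set.Ioi (0:ℝ),
        ENNReal.ofReal (Real.exp (-(m ^ 2 * ((m ^ 2)⁻¹ * u)) / 2
          - r ^ 2 / (2 * ((m ^ 2)⁻¹ * u))) / (2 * ((m ^ 2)⁻¹ * u)))
        = ∫⁻ u in Set.Ioi (0:ℝ), ENNReal.ofReal (m ^ 2) * G u := by
      refine setLIntegral_congr_fun measurableSet_Ioi ?_
      intro u hu
      have hu' : (0:ℝ) < u := hu
      rw [hGdef]; beta_reduce; rw [← ENNReal.ofReal_mul (by positivity)]
      congr 1
      have hE : -(m ^ 2 * ((m ^ 2)⁻¹ * u)) / 2 - r ^ 2 / (2 * ((m ^ 2)⁻¹ * u))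
          = -u / 2 - A / (2 * u) := by
        rw [hAdef]; field_simp
      rw [hE]
      field_simp
    rw [hcongr, lintegral_const_mul' _ _ ENNReal.ofReal_ne_top] at hscale
    have hinj := (ENNReal.mul_left_strictMono
      (a := ENNReal.ofReal (m ^ 2)) (by simp [ENNReal.ofReal_pos.2 (by positivity : (0:ℝ) < m^2), (ENNReal.ofReal_pos.2 (by positivity : (0:ℝ) < m^2)).ne']) ENNReal.ofReal_ne_top).injective
    exact (hinj (by simp only [mul_comm _ (ENNReal.ofReal (m ^ 2))]; exact hscale)).symm
  -- Step 2 : inner u-integral computation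
  have key_inner : ∀ u ∈ Set.Ioi (0:ℝ),
      (∫⁻ s in Set.Ioi (1:ℝ), F s u) = G u := by
    intro u hu
    have hu' : (0:ℝ) < u := hu
    have h1 : ∀ s : ℝ, s / 2 * Real.exp (-A / (2 * u) - s ^ 2 * u / 2)
        = (Real.exp (-A / (2 * u)) / 2) * (s * Real.exp (-(u / 2) * s ^ 2)) := by
      intro s
      rw [show -A / (2 * u) - s ^ 2 * u / 2 = (-A / (2 * u)) + (-(u / 2) * s ^ 2) by ring,
        Real.exp_add]
      ring
    have hnn : (0:ℝ) ≤ Real.exp (-A / (2 * u)) / 2 := by positivity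
    simp only [hFdef, h1]
    simp_rw [ENNReal.ofReal_mul hnn]
    rw [lintegral_const_mul' _ _ ENNReal.ofReal_ne_top]
    have hint : IntegrableOn (fun s : ℝ => s * Real.exp (-(u / 2) * s ^ 2)) (Ioi 1) :=
      (integrable_mul_exp_neg_mul_sq (by positivity : (0:ℝ) < u / 2)).integrableOn
    have hnn2 : 0 ≤ᵐ[volume.restrict (Ioi (1:ℝ))] fun s : ℝ => s * Real.exp (-(u / 2) * s ^ 2) := by
      filter_upwards [ae_restrict_mem measurableSet_Ioi] with s hs
      have : (0:ℝ) < s := lt_trans one_pos hs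
      positivity
    rw [← ofReal_integral_eq_lintegral_ofReal hint hnn2, gauss_tail hu',
      ← ENNReal.ofReal_mul hnn, hGdef]
    congr 1
    rw [show -u / 2 - A / (2 * u) = (-A / (2 * u)) + (-u / 2) by ring, Real.exp_add]
    field_simp
  -- Step 3 : per-s identity for the RHS
  have key_s : ∀ s ∈ Set.Ioi (1:ℝ),
      ENNReal.ofReal (km m (s • (x - y)) / s) = ∫⁻ u in Set.Ioi (0:ℝ), F s u := by
    intro s hs
    have hs1 : (1:ℝ) < s := hs
    have hs0 : (0:ℝ) < s := lt_trans one_pos hs1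
    have hnorm : ‖s • (x - y)‖ = s * r := by
      rw [norm_smul, Real.norm_eq_abs, abs_of_pos hs0, hrdef]
    have hkm : km m (s • (x - y))
        = (1 / 2) * ∫ t in Set.Ioi (0:ℝ), Real.exp (-(m ^ 2 * (s * r) ^ 2) / (2 * t) - t / 2) := by
      rw [km, hnorm]
    set a : ℝ := m ^ 2 * (s * r) ^ 2 with hadef
    have ha : 0 ≤ a := by positivity
    have hImeas : Measurable fun t : ℝ => ENNReal.ofReal (Real.exp (-a / (2 * t) - t / 2)) := by
      apply Measurable.ennreal_ofReal
      exact Real.measurable_exp.comp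
        ((measurable_const.div (measurable_id.const_mul 2)).sub (measurable_id.div_const 2))
    have hnn2 : 0 ≤ᵐ[volume.restrict (Ioi (0:ℝ))] fun t : ℝ =>
        Real.exp (-a / (2 * t) - t / 2) :=
      Filter.Eventually.of_forall fun t => (Real.exp_pos _).le
    have hIpos : (0:ℝ) ≤ ∫ t in Set.Ioi (0:ℝ), Real.exp (-a / (2 * t) - t / 2) :=
      integral_nonneg fun t => (Real.exp_pos _).le
    -- change of variables t = s² u
    have hsq : (0:ℝ) < s ^ 2 := by positivity
    have hscale := lint_scale _ hImeas hsq
    have hcongr : ∫⁻ u in Set.Ioi (0:ℝ),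
        ENNReal.ofReal (Real.exp (-a / (2 * (s ^ 2 * u)) - s ^ 2 * u / 2))
        = ∫⁻ u in Set.Ioi (0:ℝ), ENNReal.ofReal (Real.exp (-A / (2 * u) - s ^ 2 * u / 2)) := by
      refine setLIntegral_congr_fun measurableSet_Ioi ?_
      intro u hu
      have hu' : (0:ℝ) < u := hu
      congr 2
      rw [hadef, hAdef]
      field_simp
    rw [hcongr] at hscale
    have hsub : (∫⁻ t in Set.Ioi (0:ℝ), ENNReal.ofReal (Real.exp (-a / (2 * t) - t / 2)))
        = ENNReal.ofReal (s ^ 2)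
          * ∫⁻ u in Set.Ioi (0:ℝ), ENNReal.ofReal (Real.exp (-A / (2 * u) - s ^ 2 * u / 2)) := by
      rw [hscale, ← mul_assoc, ← ENNReal.ofReal_mul (by positivity),
        mul_inv_cancel₀ (ne_of_gt hsq), ENNReal.ofReal_one, one_mul]
    have hkm2 : ENNReal.ofReal (km m (s • (x - y)) / s)
        = ENNReal.ofReal (1 / 2) * ENNReal.ofReal
            (∫ t in Set.Ioi (0:ℝ), Real.exp (-a / (2 * t) - t / 2)) * ENNReal.ofReal s⁻¹ := by
      rw [hkm, div_eq_mul_inv, ENNReal.ofReal_mul (by positivity),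
        ENNReal.ofReal_mul (by norm_num)]
    rw [hkm2, ofReal_integral_eq_lintegral_ofReal (exp_integrable ha) hnn2, hsub]
    simp only [hFdef]
    simp_rw [ENNReal.ofReal_mul (le_of_lt (by positivity : (0:ℝ) < s / 2))]
    rw [lintegral_const_mul' _ _ ENNReal.ofReal_ne_top]
    rw [show ENNReal.ofReal (1 / 2) * (ENNReal.ofReal (s ^ 2)
        * ∫⁻ u in Set.Ioi (0:ℝ), ENNReal.ofReal (Real.exp (-A / (2 * u) - s ^ 2 * u / 2)))
        * ENNReal.ofReal s⁻¹
      = (ENNReal.ofReal (1 / 2) * ENNReal.ofReal (s ^ 2) * ENNReal.ofReal s⁻¹)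
        * ∫⁻ u in Set.Ioi (0:ℝ), ENNReal.ofReal (Real.exp (-A / (2 * u) - s ^ 2 * u / 2)) by ring]
    congr 1
    rw [← ENNReal.ofReal_mul (by norm_num), ← ENNReal.ofReal_mul (by positivity)]
    congr 1
    field_simp
  -- assemble
  calc
    (∫⁻ s in Set.Ioi (0 : ℝ),
        ENNReal.ofReal (Real.exp (-(m ^ 2 * s) / 2 - r ^ 2 / (2 * s)) / (2 * s)))
        = ∫⁻ u in Set.Ioi (0:ℝ), G u := step1
    _ = ∫⁻ u in Set.Ioi (0:ℝ), ∫⁻ s in Set.Ioi (1:ℝ), F s u := by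
        refine setLIntegral_congr_fun measurableSet_Ioi ?_
        intro u hu
        exact (key_inner u hu).symm
    _ = ∫⁻ s in Set.Ioi (1:ℝ), ∫⁻ u in Set.Ioi (0:ℝ), F s u :=
        (lintegral_lintegral_swap hFmeas.aemeasurable).symm
    _ = ∫⁻ s in Set.Ioi (1 : ℝ), ENNReal.ofReal (km m (s • (x - y)) / s) := by
        refine setLIntegral_congr_fun measurableSet_Ioi ?_
        intro s hs
        exact (key_s s hs).symm
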